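/- Let ν ∈ [0,1) and χ ∈ (0,1), and define h = (1/4) log( (χ/(1-χ) + ν) / (1/χ - (1-ν)) ) and J = (1/4) log( 1 + ν/((1-ν)^2 χ (1-χ)) ). Then, with Λ(x) = e^{2x}/(1+e^{2x}), one has Λ(h + J) = ν + (1-ν)χ and Λ(h - J) = (1-ν)χ. Consequently, for N = 1 the Kinetic Ising Model with parameters (J, h) has exactly the same transition probabilities as the DAR(1) process with parameters (ν, χ): for all X, X' ∈ {0,1}, Λ((2X-1)(h + J(2X'-1))) = ν δ_{X,X'} + (1-ν) χ^X (1-χ)^{1-X}. -/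

import Mathlib

/-- The logistic function `Λ(x) = e^{2x}/(1 + e^{2x})`. -/
noncomputable def Lam (x : ℝ) : ℝ := Real.exp (2 * x) / (1 + Real.exp (2 * x))

lemma Lam_of (x p : ℝ) (hp : 1 - p > 0) (hx : Real.exp (2 * x) = p / (1 - p)) :
    Lam x = p := by
  have h1 : (0:ℝ) < 1 + Real.exp (2 * x) := by positivity
  unfold Lam
  rw [hx]
  field_simp
  ring

lemma Lam_neg (x : ℝ) : Lam (-x) = 1 - Lam x := by
  unfold Lam
  rw [show 2 * (-x) = -(2 * x) by ring, Real.exp_neg]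
  have h1 : (0:ℝ) < Real.exp (2 * x) := Real.exp_pos _
  have h2 : (0:ℝ) < 1 + Real.exp (2 * x) := by positivity
  field_simp
  ring

open scoped Classical in
theorem stmt_7 (ν χ h J : ℝ) (hν : ν ∈ Set.Ico (0 : ℝ) 1) (hχ : χ ∈ Set.Ioo (0 : ℝ) 1)
    (hh : h = (1 / 4) * Real.log ((χ / (1 - χ) + ν) / (1 / χ - (1 - ν))))
    (hJ : J = (1 / 4) * Real.log (1 + ν / ((1 - ν) ^ 2 * χ * (1 - χ)))) :
    Lam (h + J) = ν + (1 - ν) * χ ∧ Lam (h - J) = (1 - ν) * χ ∧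
    ∀ X X' : ℝ, (X = 0 ∨ X = 1) → (X' = 0 ∨ X' = 1) →
      Lam ((2 * X - 1) * (h + J * (2 * X' - 1))) =
        ν * (if X = X' then 1 else 0) + (1 - ν) * χ ^ X * (1 - χ) ^ (1 - X) := by
  obtain ⟨hν0, hν1⟩ := hν
  obtain ⟨hχ0, hχ1⟩ := hχ
  have hν1' : (0:ℝ) < 1 - ν := by linarith
  have hχ1' : (0:ℝ) < 1 - χ := by linarith
  have hb1 : (0:ℝ) < 1 - (1 - ν) * χ := by nlinarith
  have ha0 : (0:ℝ) < ν + (1 - ν) * χ := by nlinarith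
  -- rewrite A and B in clean rational forms
  have hA' : (χ / (1 - χ) + ν) / (1 / χ - (1 - ν)) =
      χ * (ν + (1 - ν) * χ) / ((1 - χ) * (1 - (1 - ν) * χ)) := by
    rw [div_eq_div_iff]
    · field_simp
      ring
    · rw [show 1 / χ - (1 - ν) = (1 - (1 - ν) * χ) / χ by field_simp]
      positivity
    · positivity
  have hB' : 1 + ν / ((1 - ν) ^ 2 * χ * (1 - χ)) =
      (ν + (1 - ν) * χ) * (1 - (1 - ν) * χ) / ((1 - ν) ^ 2 * χ * (1 - χ)) := by
    rw [eq_div_iff (by positivity)]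
    field_simp
    ring
  have hApos : (0:ℝ) < χ * (ν + (1 - ν) * χ) / ((1 - χ) * (1 - (1 - ν) * χ)) := by
    positivity
  have hBpos : (0:ℝ) < (ν + (1 - ν) * χ) * (1 - (1 - ν) * χ) / ((1 - ν) ^ 2 * χ * (1 - χ)) := by
    positivity
  have hAB : χ * (ν + (1 - ν) * χ) / ((1 - χ) * (1 - (1 - ν) * χ)) *
      ((ν + (1 - ν) * χ) * (1 - (1 - ν) * χ) / ((1 - ν) ^ 2 * χ * (1 - χ))) =
      ((ν + (1 - ν) * χ) / ((1 - ν) * (1 - χ))) ^ 2 := by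
    rw [div_mul_div_comm, div_pow, div_eq_div_iff (by positivity) (by positivity)]
    ring
  have hAdB : χ * (ν + (1 - ν) * χ) / ((1 - χ) * (1 - (1 - ν) * χ)) /
      ((ν + (1 - ν) * χ) * (1 - (1 - ν) * χ) / ((1 - ν) ^ 2 * χ * (1 - χ))) =
      ((1 - ν) * χ / (1 - (1 - ν) * χ)) ^ 2 := by
    field_simp
  have e1 : Real.exp (2 * (h + J)) = (ν + (1 - ν) * χ) / ((1 - ν) * (1 - χ)) := by
    have hlog : 2 * (h + J) = Real.log ((ν + (1 - ν) * χ) / ((1 - ν) * (1 - χ))) := by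
      rw [hh, hJ, hA', hB']
      have := Real.log_mul (ne_of_gt hApos) (ne_of_gt hBpos)
      rw [hAB] at this
      rw [show (((ν + (1-ν)*χ) / ((1-ν)*(1-χ)))^2 : ℝ) =
          ((ν + (1-ν)*χ) / ((1-ν)*(1-χ)))^(2:ℕ) by norm_num, Real.log_pow] at this
      push_cast at this
      linarith
    rw [hlog, Real.exp_log (by positivity)]
  have e2 : Real.exp (2 * (h - J)) = (1 - ν) * χ / (1 - (1 - ν) * χ) := by
    have hlog : 2 * (h - J) = Real.log ((1 - ν) * χ / (1 - (1 - ν) * χ)) := by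
      rw [hh, hJ, hA', hB']
      have := Real.log_div (ne_of_gt hApos) (ne_of_gt hBpos)
      rw [hAdB] at this
      rw [show (((1-ν)*χ / (1 - (1-ν)*χ))^2 : ℝ) =
          ((1-ν)*χ / (1 - (1-ν)*χ))^(2:ℕ) by norm_num, Real.log_pow] at this
      push_cast at this
      linarith
    rw [hlog, Real.exp_log (by positivity)]
  have ha1 : (0:ℝ) < 1 - (ν + (1 - ν) * χ) := by nlinarith
  have L1 : Lam (h + J) = ν + (1 - ν) * χ := by
    apply Lam_of _ _ ha1
    rw [e1, show (1:ℝ) - (ν + (1 - ν) * χ) = (1 - ν) * (1 - χ) by ring]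
  have L2 : Lam (h - J) = (1 - ν) * χ := by
    apply Lam_of _ _ (by nlinarith)
    rw [e2]
  refine ⟨L1, L2, ?_⟩
  rintro X X' (rfl | rfl) (rfl | rfl)
  · rw [show (2 * (0:ℝ) - 1) * (h + J * (2 * 0 - 1)) = -(h - J) by ring, Lam_neg, L2]
    norm_num [Real.rpow_natCast]
    ring
  · rw [show (2 * (0:ℝ) - 1) * (h + J * (2 * 1 - 1)) = -(h + J) by ring, Lam_neg, L1]
    norm_num [Real.rpow_natCast]
    ring
  · rw [show (2 * (1:ℝ) - 1) * (h + J * (2 * 0 - 1)) = h - J by ring, L2]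
    norm_num [Real.rpow_natCast]
  · rw [show (2 * (1:ℝ) - 1) * (h + J * (2 * 1 - 1)) = h + J by ring, L1]
    norm_num [Real.rpow_natCast]
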